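/- Let R be a G-graded ring. Every graded ideal of R is graded strongly weakly 2-absorbing if and only if for all graded ideals I, J, K of R, IJ = IJK or IK = IJK or JK = IJK or IJK = 0. -/

import Mathlib

variable {G R : Type*} [AddGroup G] [DecidableEq G] [Ring R]

/-- A two-sided ideal is graded if it contains all homogeneous components of its elements. -/
def IsGradedIdeal (𝒜 : G → AddSubgroup R) [GradedRing 𝒜] (P : TwoSidedIdeal R) : Prop :=
  ∀ a ∈ P, ∀ g : G, (DirectSum.decompose 𝒜 a g : R) ∈ P

/-- Graded strongly weakly 2-absorbing: a proper graded ideal `P` such that for graded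
ideals `A, B, C` with `0 ≠ ABC ⊆ P`, we have `AB ⊆ P` or `AC ⊆ P` or `BC ⊆ P`. -/
def IsGradedStronglyWeakly2Absorbing (𝒜 : G → AddSubgroup R) [GradedRing 𝒜]
    (P : TwoSidedIdeal R) : Prop :=
  P ≠ ⊤ ∧ IsGradedIdeal 𝒜 P ∧
    ∀ A B C : TwoSidedIdeal R, IsGradedIdeal 𝒜 A → IsGradedIdeal 𝒜 B → IsGradedIdeal 𝒜 C →
      (∃ a ∈ A, ∃ b ∈ B, ∃ c ∈ C, a * b * c ≠ 0) →
      (∀ a ∈ A, ∀ b ∈ B, ∀ c ∈ C, a * b * c ∈ P) →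
      (∀ a ∈ A, ∀ b ∈ B, a * b ∈ P) ∨ (∀ a ∈ A, ∀ c ∈ C, a * c ∈ P) ∨
        (∀ b ∈ B, ∀ c ∈ C, b * c ∈ P)

/-- The product of two two-sided ideals: the two-sided ideal generated by products `a * b`
with `a ∈ I`, `b ∈ J`. -/
def tsiMul (I J : TwoSidedIdeal R) : TwoSidedIdeal R :=
  TwoSidedIdeal.span {x : R | ∃ a ∈ I, ∃ b ∈ J, x = a * b}

namespace Stmt19Aux

lemma mem_tsiMul_iff {I J : TwoSidedIdeal R} {x : R} :
    x ∈ tsiMul I J ↔ x ∈ AddSubgroup.closure {x : R | ∃ a ∈ I, ∃ b ∈ J, x = a * b} := by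
  refine TwoSidedIdeal.mem_span_iff_mem_addSubgroup_closure_absorbing ?_ ?_
  · rintro r - ⟨a, ha, b, hb, rfl⟩
    exact ⟨r * a, I.mul_mem_left _ _ ha, b, hb, (mul_assoc _ _ _).symm⟩
  · rintro - r ⟨a, ha, b, hb, rfl⟩
    exact ⟨a, ha, b * r, J.mul_mem_right _ _ hb, mul_assoc _ _ _⟩

lemma mul_mem_tsiMul {I J : TwoSidedIdeal R} {a b : R} (ha : a ∈ I) (hb : b ∈ J) :
    a * b ∈ tsiMul I J :=
  TwoSidedIdeal.subset_span ⟨a, ha, b, hb, rfl⟩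

lemma tsiMul_le {I J P : TwoSidedIdeal R} (h : ∀ a ∈ I, ∀ b ∈ J, a * b ∈ P) :
    tsiMul I J ≤ P := by
  intro x hx
  refine TwoSidedIdeal.mem_span_iff.mp hx P ?_
  rintro y ⟨a, ha, b, hb, rfl⟩
  exact h a ha b hb

lemma mem_tsi3_iff {I J K : TwoSidedIdeal R} {x : R} :
    x ∈ tsiMul (tsiMul I J) K ↔
      x ∈ AddSubgroup.closure {x : R | ∃ a ∈ I, ∃ b ∈ J, ∃ c ∈ K, x = a * b * c} := by
  rw [mem_tsiMul_iff]
  congr! 1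
  refine le_antisymm (AddSubgroup.closure_le _ |>.mpr ?_) (AddSubgroup.closure_le _ |>.mpr ?_)
  · rintro - ⟨d, hd, c, hc, rfl⟩
    rw [mem_tsiMul_iff] at hd
    induction hd using AddSubgroup.closure_induction with
    | mem y hy =>
      obtain ⟨a, ha, b, hb, rfl⟩ := hy
      exact AddSubgroup.subset_closure ⟨a, ha, b, hb, c, hc, rfl⟩
    | zero => simpa using AddSubgroup.zero_mem _
    | add y z _ _ hy hz =>
      simpa [add_mul] using AddSubgroup.add_mem _ hy hz
    | neg y _ hy =>
      simpa [neg_mul] using AddSubgroup.neg_mem _ hy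
  · rintro - ⟨a, ha, b, hb, c, hc, rfl⟩
    exact AddSubgroup.subset_closure ⟨a * b, mul_mem_tsiMul ha hb, c, hc, rfl⟩

lemma tsi3_le {A B C P : TwoSidedIdeal R} (h : ∀ a ∈ A, ∀ b ∈ B, ∀ c ∈ C, a * b * c ∈ P) :
    tsiMul (tsiMul A B) C ≤ P := by
  refine tsiMul_le ?_
  intro d hd c hc
  rw [mem_tsiMul_iff] at hd
  induction hd using AddSubgroup.closure_induction with
  | mem y hy =>
    obtain ⟨a, ha, b, hb, rfl⟩ := hy
    exact h a ha b hb c hc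
  | zero => simpa using P.zero_mem
  | add y z _ _ hy hz => simpa [add_mul] using P.add_mem hy hz
  | neg y _ hy => simpa [neg_mul] using P.neg_mem hy

lemma tsi3_le_left {I J K : TwoSidedIdeal R} : tsiMul (tsiMul I J) K ≤ tsiMul I J :=
  tsiMul_le fun d hd c _ => (tsiMul I J).mul_mem_right _ _ hd

lemma tsiMul_le_left {I J : TwoSidedIdeal R} : tsiMul I J ≤ I :=
  tsiMul_le fun a ha b _ => I.mul_mem_right _ _ ha

lemma tsiMul_le_right {I J : TwoSidedIdeal R} : tsiMul I J ≤ J :=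
  tsiMul_le fun a _ b hb => J.mul_mem_left _ _ hb

lemma tsi3_le_mid {I J K : TwoSidedIdeal R} : tsiMul (tsiMul I J) K ≤ tsiMul I K :=
  tsiMul_le fun d hd c hc => mul_mem_tsiMul (tsiMul_le_left hd) hc

lemma tsi3_le_right {I J K : TwoSidedIdeal R} : tsiMul (tsiMul I J) K ≤ tsiMul J K :=
  tsiMul_le fun d hd c hc => mul_mem_tsiMul (tsiMul_le_right hd) hc

/-- The `g`-component map as an additive monoid hom. -/
def dcomp (𝒜 : G → AddSubgroup R) [GradedRing 𝒜] (g : G) : R →+ R where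
  toFun x := (DirectSum.decompose 𝒜 x g : R)
  map_zero' := by simp
  map_add' x y := by simp

lemma tsiMul_isGraded {𝒜 : G → AddSubgroup R} [GradedRing 𝒜] {I J : TwoSidedIdeal R}
    (hI : IsGradedIdeal 𝒜 I) (hJ : IsGradedIdeal 𝒜 J) : IsGradedIdeal 𝒜 (tsiMul I J) := by
  classical
  intro x hx g
  rw [mem_tsiMul_iff] at hx
  induction hx using AddSubgroup.closure_induction with
  | mem y hy =>
    obtain ⟨a, ha, b, hb, rfl⟩ := hy
    have hab : a * b =
        ∑ i ∈ (DirectSum.decompose 𝒜 a).support, ∑ j ∈ (DirectSum.decompose 𝒜 b).support,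
          (DirectSum.decompose 𝒜 a i : R) * (DirectSum.decompose 𝒜 b j : R) := by
      rw [← Finset.sum_mul_sum, DirectSum.sum_support_decompose, DirectSum.sum_support_decompose]
    have : (DirectSum.decompose 𝒜 (a * b) g : R) = dcomp 𝒜 g (a * b) := rfl
    rw [this, hab, map_sum]
    refine Finset.sum_induction _ (· ∈ tsiMul I J) (fun u v => (tsiMul I J).add_mem)
      (tsiMul I J).zero_mem fun i _ => ?_
    rw [map_sum]
    refine Finset.sum_induction _ (· ∈ tsiMul I J) (fun u v => (tsiMul I J).add_mem)
      (tsiMul I J).zero_mem fun j _ => ?_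
    have hmem : (DirectSum.decompose 𝒜 a i : R) * (DirectSum.decompose 𝒜 b j : R) ∈ 𝒜 (i + j) :=
      SetLike.mul_mem_graded (SetLike.coe_mem _) (SetLike.coe_mem _)
    by_cases hg : i + j = g
    · have : dcomp 𝒜 g ((DirectSum.decompose 𝒜 a i : R) * (DirectSum.decompose 𝒜 b j : R)) =
          (DirectSum.decompose 𝒜 a i : R) * (DirectSum.decompose 𝒜 b j : R) := by
        subst hg
        exact DirectSum.decompose_of_mem_same 𝒜 hmem
      rw [this]
      exact mul_mem_tsiMul (hI a ha i) (hJ b hb j)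
    · have : dcomp 𝒜 g ((DirectSum.decompose 𝒜 a i : R) * (DirectSum.decompose 𝒜 b j : R)) = 0 :=
        DirectSum.decompose_of_mem_ne 𝒜 hmem hg
      rw [this]
      exact (tsiMul I J).zero_mem
  | zero => simpa using (tsiMul I J).zero_mem
  | add y z _ _ hy hz =>
    have : (DirectSum.decompose 𝒜 (y + z) g : R) =
        (DirectSum.decompose 𝒜 y g : R) + (DirectSum.decompose 𝒜 z g : R) := by simp
    rw [this]; exact (tsiMul I J).add_mem hy hz
  | neg y _ hy =>
    have : (DirectSum.decompose 𝒜 (-y) g : R) = -(DirectSum.decompose 𝒜 y g : R) :=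
      map_neg (dcomp 𝒜 g) y
    rw [this]; exact (tsiMul I J).neg_mem hy

end Stmt19Aux

open Stmt19Aux in
/-- Proposition 6.10: every graded ideal of `R` is graded strongly weakly 2-absorbing if and
only if for all graded ideals `I, J, K` we have `IJ = IJK` or `IK = IJK` or `JK = IJK` or
`IJK = 0`. -/
theorem stmt19 (𝒜 : G → AddSubgroup R) [GradedRing 𝒜] :
    (∀ P : TwoSidedIdeal R, P ≠ ⊤ → IsGradedIdeal 𝒜 P →
        IsGradedStronglyWeakly2Absorbing 𝒜 P) ↔
      ∀ I J K : TwoSidedIdeal R, IsGradedIdeal 𝒜 I → IsGradedIdeal 𝒜 J → IsGradedIdeal 𝒜 K →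
        tsiMul I J = tsiMul (tsiMul I J) K ∨ tsiMul I K = tsiMul (tsiMul I J) K ∨
          tsiMul J K = tsiMul (tsiMul I J) K ∨ tsiMul (tsiMul I J) K = ⊥ := by
  constructor
  · intro H I J K hI hJ hK
    by_cases hbot : tsiMul (tsiMul I J) K = ⊥
    · exact Or.inr (Or.inr (Or.inr hbot))
    by_cases htop : tsiMul (tsiMul I J) K = ⊤
    · refine Or.inl (le_antisymm ?_ tsi3_le_left)
      rw [htop]; exact le_top
    -- the triple product is a proper graded ideal
    have hgr : IsGradedIdeal 𝒜 (tsiMul (tsiMul I J) K) :=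
      tsiMul_isGraded (tsiMul_isGraded hI hJ) hK
    obtain ⟨-, -, habs⟩ := H _ htop hgr
    have hne : ∃ a ∈ I, ∃ b ∈ J, ∃ c ∈ K, a * b * c ≠ 0 := by
      by_contra hcon
      push_neg at hcon
      apply hbot
      refine le_antisymm ?_ bot_le
      refine tsi3_le fun a ha b hb c hc => ?_
      rw [TwoSidedIdeal.mem_bot]
      exact hcon a ha b hb c hc
    have hsub : ∀ a ∈ I, ∀ b ∈ J, ∀ c ∈ K, a * b * c ∈ tsiMul (tsiMul I J) K :=
      fun a ha b hb c hc => mul_mem_tsiMul (mul_mem_tsiMul ha hb) hc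
    rcases habs I J K hI hJ hK hne hsub with h | h | h
    · exact Or.inl (le_antisymm (tsiMul_le h) tsi3_le_left)
    · exact Or.inr (Or.inl (le_antisymm (tsiMul_le h) tsi3_le_mid))
    · exact Or.inr (Or.inr (Or.inl (le_antisymm (tsiMul_le h) tsi3_le_right)))
  · intro H P hP hPg
    refine ⟨hP, hPg, fun A B C hA hB hC hne hsub => ?_⟩
    have hle : tsiMul (tsiMul A B) C ≤ P := tsi3_le hsub
    rcases H A B C hA hB hC with h | h | h | h
    · exact Or.inl fun a ha b hb => hle (h ▸ mul_mem_tsiMul ha hb)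
    · exact Or.inr (Or.inl fun a ha c hc => hle (h ▸ mul_mem_tsiMul ha hc))
    · exact Or.inr (Or.inr fun b hb c hc => hle (h ▸ mul_mem_tsiMul hb hc))
    · obtain ⟨a, ha, b, hb, c, hc, habc⟩ := hne
      have hmem : a * b * c ∈ tsiMul (tsiMul A B) C :=
        mul_mem_tsiMul (mul_mem_tsiMul ha hb) hc
      rw [h, TwoSidedIdeal.mem_bot] at hmem
      exact absurd hmem habc
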